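/- Let P be a finite nonempty set with |P| = n, let m ≥ 0 be an integer, let (x_1, …, x_m) be any sequence of elements of P, and let h > 0. For each i define the running count N_i = Σ_{j=1}^i 1{x_j = x_i}. Then Σ_{i=1}^m 1/(N_i + h) ≤ n·Σ_{i=1}^{⌈m/n⌉} 1/(i + h) ≤ n·log((⌈m/n⌉ + h)/h). -/

import Mathlib

open Finset

lemma harmonic_log_bound (h : ℝ) (hh : 0 < h) (M : ℕ) :
    ∑ k ∈ Icc 1 M, 1 / ((k : ℝ) + h) ≤ Real.log (((M : ℝ) + h) / h) := by
  have key : ∀ k : ℕ, 1 / ((k : ℝ) + 1 + h)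
      ≤ Real.log (((k:ℝ)+1) + h) - Real.log ((k:ℝ) + h) := by
    intro k
    have h1 : (0:ℝ) < (k:ℝ) + h := by positivity
    have h2 : (0:ℝ) < (k:ℝ) + 1 + h := by positivity
    have hlog := Real.log_le_sub_one_of_pos (show (0:ℝ) < ((k:ℝ)+h)/((k:ℝ)+1+h) by positivity)
    rw [Real.log_div (ne_of_gt h1) (ne_of_gt h2)] at hlog
    have heq : ((k:ℝ)+h)/((k:ℝ)+1+h) - 1 = -(1/((k:ℝ)+1+h)) := by field_simp; ring
    have : Real.log ((k:ℝ)+h) - Real.log ((k:ℝ)+1+h) ≤ -(1/((k:ℝ)+1+h)) := by linarith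
    linarith
  have tele : ∑ k ∈ range M, (Real.log (((k:ℝ)+1) + h) - Real.log ((k:ℝ) + h))
      = Real.log ((M:ℝ) + h) - Real.log ((0:ℝ) + h) := by
    have := Finset.sum_range_sub (fun k : ℕ => Real.log ((k:ℝ) + h)) M
    simpa using this
  have hshift : ∑ k ∈ Icc 1 M, 1 / ((k : ℝ) + h)
      = ∑ k ∈ range M, 1 / ((k:ℝ) + 1 + h) := by
    rw [show Icc 1 M = Ico 1 (M+1) from (Finset.Ico_add_one_right_eq_Icc 1 M).symm,
      Finset.sum_Ico_eq_sum_range]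
    simp only [Nat.add_sub_cancel]
    apply Finset.sum_congr rfl
    intro k _
    push_cast
    ring_nf
  rw [hshift, Real.log_div (by positivity) (ne_of_gt hh)]
  calc ∑ k ∈ range M, 1 / ((k:ℝ) + 1 + h)
      ≤ ∑ k ∈ range M, (Real.log (((k:ℝ)+1) + h) - Real.log ((k:ℝ) + h)) :=
        Finset.sum_le_sum fun k _ => key k
    _ = Real.log ((M:ℝ) + h) - Real.log h := by rw [tele]; norm_num


lemma harmonic_shift_bound (h : ℝ) (hh : 0 < h) (c M : ℕ) :
    ∑ k ∈ Icc 1 c, 1 / ((k : ℝ) + h)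
      ≤ (∑ k ∈ Icc 1 M, 1 / ((k : ℝ) + h)) + ((c:ℝ) - (M:ℝ)) / ((M:ℝ) + h) := by
  have hIoc : ∀ a : ℕ, Icc 1 a = Ioc 0 a := fun a => by
    rw [← Finset.Icc_add_one_left_eq_Ioc]; rfl
  rcases le_or_gt c M with hc | hc
  · have hsplit : (∑ k ∈ Ioc 0 c, 1 / ((k : ℝ) + h)) + ∑ k ∈ Ioc c M, 1 / ((k : ℝ) + h)
        = ∑ k ∈ Ioc 0 M, 1 / ((k : ℝ) + h) :=
      Finset.sum_Ioc_consecutive _ (Nat.zero_le c) hc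
    have hterm : ∀ k ∈ Ioc c M, 1 / ((M:ℝ) + h) ≤ 1 / ((k:ℝ) + h) := by
      intro k hk
      have : (k:ℝ) ≤ M := by exact_mod_cast (mem_Ioc.mp hk).2
      apply one_div_le_one_div_of_le (by positivity) (by linarith)
    have hcard : (Ioc c M).card = M - c := by simp
    have hlow : ((M - c : ℕ) : ℝ) * (1 / ((M:ℝ) + h)) ≤ ∑ k ∈ Ioc c M, 1 / ((k:ℝ) + h) := by
      have := Finset.card_nsmul_le_sum (Ioc c M) _ _ hterm
      rw [hcard] at this
      simpa [nsmul_eq_mul] using this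
    have hcast : ((M - c : ℕ) : ℝ) = (M:ℝ) - c := by
      push_cast [hc]; ring
    rw [hcast] at hlow
    rw [hIoc c, hIoc M, div_eq_mul_one_div]
    linarith
  · have hsplit : (∑ k ∈ Ioc 0 M, 1 / ((k : ℝ) + h)) + ∑ k ∈ Ioc M c, 1 / ((k : ℝ) + h)
        = ∑ k ∈ Ioc 0 c, 1 / ((k : ℝ) + h) :=
      Finset.sum_Ioc_consecutive _ (Nat.zero_le M) hc.le
    have hterm : ∀ k ∈ Ioc M c, 1 / ((k:ℝ) + h) ≤ 1 / ((M:ℝ) + h) := by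
      intro k hk
      have : (M:ℝ) ≤ k := by exact_mod_cast (mem_Ioc.mp hk).1.le
      apply one_div_le_one_div_of_le (by positivity) (by linarith)
    have hcard : (Ioc M c).card = c - M := by simp
    have hup : ∑ k ∈ Ioc M c, 1 / ((k:ℝ) + h) ≤ ((c - M : ℕ) : ℝ) * (1 / ((M:ℝ) + h)) := by
      have := Finset.sum_le_card_nsmul (Ioc M c) _ _ hterm
      rw [hcard] at this
      simpa [nsmul_eq_mul] using this
    have hcast : ((c - M : ℕ) : ℝ) = (c:ℝ) - M := by
      push_cast [hc.le]; ring
    rw [hcast] at hup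
    rw [hIoc c, hIoc M, div_eq_mul_one_div]
    linarith


/-- Combinatorial scheduling bound: for any sequence `x_1, …, x_m` in a finite set `P`
of size `n`, with running counts `N_i = Σ_{j=1}^i 1{x_j = x_i}` and any `h > 0`,
`Σ_{i=1}^m 1/(N_i + h) ≤ n·Σ_{i=1}^{⌈m/n⌉} 1/(i + h) ≤ n·log((⌈m/n⌉ + h)/h)`. -/
theorem scheduling_harmonic_bound {P : Type*} [Fintype P] [Nonempty P] [DecidableEq P]
    (n : ℕ) (hn : Fintype.card P = n) (m : ℕ) (x : ℕ → P) (h : ℝ) (hh : 0 < h) :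
    (∑ i ∈ Finset.Icc 1 m,
        1 / ((((Finset.Icc 1 i).filter (fun j => x j = x i)).card : ℝ) + h))
      ≤ (n : ℝ) * ∑ i ∈ Finset.Icc 1 (⌈(m : ℝ) / (n : ℝ)⌉.toNat), 1 / ((i : ℝ) + h) ∧
    (n : ℝ) * (∑ i ∈ Finset.Icc 1 (⌈(m : ℝ) / (n : ℝ)⌉.toNat), 1 / ((i : ℝ) + h))
      ≤ (n : ℝ) * Real.log (((⌈(m : ℝ) / (n : ℝ)⌉.toNat : ℝ) + h) / h) := by
  set M : ℕ := (⌈(m : ℝ) / (n : ℝ)⌉).toNat with hMdef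
  have hn1 : 1 ≤ n := hn ▸ Fintype.card_pos
  have hnR : (0:ℝ) < n := by exact_mod_cast hn1
  -- m ≤ n * M over ℝ
  have hmnM : (m : ℝ) ≤ (n : ℝ) * (M : ℝ) := by
    have h0 : (0:ℝ) ≤ (m:ℝ) / n := by positivity
    have h1 : (0:ℤ) ≤ ⌈(m : ℝ) / (n : ℝ)⌉ := Int.ceil_nonneg h0
    have h2 : ((M:ℕ):ℝ) = ((⌈(m : ℝ) / (n : ℝ)⌉ : ℤ) : ℝ) := by
      rw [hMdef]; exact_mod_cast Int.toNat_of_nonneg h1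
    have h3 : (m:ℝ) / n ≤ (M:ℝ) := by rw [h2]; exact Int.le_ceil _
    calc (m:ℝ) = (n:ℝ) * ((m:ℝ)/n) := by field_simp
      _ ≤ (n:ℝ) * M := by apply mul_le_mul_of_nonneg_left h3 hnR.le
  have pos : ∀ k : ℕ, (0:ℝ) ≤ 1 / ((k:ℝ) + h) := fun k => by positivity
  constructor
  · -- main combinatorial part
    set N : ℕ → ℕ := fun i => ((Icc 1 i).filter (fun j => x j = x i)).card with hNdef
    set S : P → Finset ℕ := fun p => (Icc 1 m).filter (fun i => x i = p) with hSdef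
    have hsplit : ∑ i ∈ Icc 1 m, 1 / ((N i : ℝ) + h)
        = ∑ p : P, ∑ i ∈ S p, 1 / ((N i : ℝ) + h) :=
      (Finset.sum_fiberwise (Icc 1 m) x (fun i => 1 / ((N i : ℝ) + h))).symm
    have fiber : ∀ p : P, ∑ i ∈ S p, 1 / ((N i : ℝ) + h)
        ≤ ∑ k ∈ Icc 1 (S p).card, 1 / ((k:ℝ) + h) := by
      intro p
      have hNp : ∀ i ∈ S p, N i = ((Icc 1 i).filter (fun j => x j = p)).card := by
        intro i hi
        have : x i = p := (mem_filter.mp hi).2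
        simp [hNdef, this]
      have mono : ∀ i ∈ S p, ∀ i' ∈ S p, i < i' → N i < N i' := by
        intro i hi i' hi' hlt
        rw [hNp i hi, hNp i' hi']
        apply Finset.card_lt_card
        rw [Finset.ssubset_iff_of_subset
          (Finset.filter_subset_filter _ (Finset.Icc_subset_Icc_right hlt.le))]
        refine ⟨i', ?_, ?_⟩
        · have h1 : 1 ≤ i' := (mem_Icc.mp (mem_filter.mp hi').1).1
          have h2 : x i' = p := (mem_filter.mp hi').2
          simp [mem_filter, mem_Icc, h1, h2]
        · simp only [mem_filter, mem_Icc, not_and]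
          intro hmem
          omega
      have inj : ∀ i ∈ S p, ∀ i' ∈ S p, N i = N i' → i = i' := by
        intro i hi i' hi' he
        rcases lt_trichotomy i i' with hlt | heq | hgt
        · exact absurd he (mono i hi i' hi' hlt).ne
        · exact heq
        · exact absurd he.symm (mono i' hi' i hi hgt).ne
      have hsub : (S p).image N ⊆ Icc 1 (S p).card := by
        intro k hk
        obtain ⟨i, hi, rfl⟩ := Finset.mem_image.mp hk
        have h1i : 1 ≤ i := (mem_Icc.mp (mem_filter.mp hi).1).1
        have him : i ≤ m := (mem_Icc.mp (mem_filter.mp hi).1).2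
        rw [mem_Icc]
        constructor
        · rw [hNp i hi]
          apply Finset.card_pos.mpr
          exact ⟨i, by simp [mem_filter, mem_Icc, h1i, (mem_filter.mp hi).2]⟩
        · rw [hNp i hi]
          exact Finset.card_le_card
            (Finset.filter_subset_filter _ (Finset.Icc_subset_Icc_right him))
      calc ∑ i ∈ S p, 1 / ((N i : ℝ) + h)
          = ∑ k ∈ (S p).image N, 1 / ((k:ℝ) + h) := by rw [Finset.sum_image inj]
        _ ≤ ∑ k ∈ Icc 1 (S p).card, 1 / ((k:ℝ) + h) :=
            Finset.sum_le_sum_of_subset_of_nonneg hsub (fun k _ _ => pos k)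
    have hcards : ∑ p : P, (S p).card = m := by
      have := Finset.card_eq_sum_card_fiberwise
        (f := x) (s := Icc 1 m) (t := Finset.univ) (fun i _ => Finset.mem_univ _)
      simpa [hSdef] using this.symm
    calc ∑ i ∈ Icc 1 m, 1 / ((N i : ℝ) + h)
        = ∑ p : P, ∑ i ∈ S p, 1 / ((N i : ℝ) + h) := hsplit
      _ ≤ ∑ p : P, ∑ k ∈ Icc 1 (S p).card, 1 / ((k:ℝ) + h) :=
          Finset.sum_le_sum fun p _ => fiber p
      _ ≤ ∑ p : P, ((∑ k ∈ Icc 1 M, 1 / ((k:ℝ) + h))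
            + (((S p).card : ℝ) - M) / ((M:ℝ) + h)) :=
          Finset.sum_le_sum fun p _ => harmonic_shift_bound h hh _ M
      _ = (n:ℝ) * (∑ k ∈ Icc 1 M, 1 / ((k:ℝ) + h))
            + ((m:ℝ) - (n:ℝ) * M) / ((M:ℝ) + h) := by
          rw [Finset.sum_add_distrib, Finset.sum_const, Finset.card_univ, hn,
            ← Finset.sum_div, Finset.sum_sub_distrib, Finset.sum_const, Finset.card_univ, hn]
          have : ∑ p : P, ((S p).card : ℝ) = (m:ℝ) := by exact_mod_cast hcards
          rw [this]
          ring
      _ ≤ (n:ℝ) * ∑ k ∈ Icc 1 M, 1 / ((k:ℝ) + h) := by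
          have : ((m:ℝ) - (n:ℝ) * M) / ((M:ℝ) + h) ≤ 0 := by
            apply div_nonpos_of_nonpos_of_nonneg (by linarith) (by positivity)
          linarith
  · exact mul_le_mul_of_nonneg_left (harmonic_log_bound h hh M) hnR.le
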